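/- Let u, v, x, y be distinct vertices of a digraph such that u↔2v x, v↔2v x, u↔2v y, and v↔2v y. Then x↔2v y and u↔2v v. -/

import Mathlib

variable {V : Type*}

/-- Mutual reachability (strong connectivity of a pair) in the digraph `E`. -/
def SConn (E : V → V → Prop) (u v : V) : Prop :=
  Relation.ReflTransGen E u v ∧ Relation.ReflTransGen E v u

/-- The digraph obtained from `E` by deleting vertex `w` (and incident edges). -/
def delV (E : V → V → Prop) (w : V) : V → V → Prop :=
  fun a b => E a b ∧ a ≠ w ∧ b ≠ w

/-- The digraph obtained from `E` by deleting the single edge `(a,b)`. -/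
def delE (E : V → V → Prop) (a b : V) : V → V → Prop :=
  fun x y => E x y ∧ ¬(x = a ∧ y = b)

/-- `u` and `v` are vertex-resilient: they are distinct and remain strongly
connected after deletion of any single other vertex. -/
def VRes (E : V → V → Prop) (u v : V) : Prop :=
  u ≠ v ∧ ∀ w, w ≠ u → w ≠ v → SConn (delV E w) u v

/-- A vertex-resilient block: a maximal set of size ≥ 2 of pairwise
vertex-resilient vertices. -/
def IsVRBlock (E : V → V → Prop) (B : Set V) : Prop :=
  B.Pairwise (VRes E) ∧ (∃ a ∈ B, ∃ b ∈ B, a ≠ b) ∧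
    ∀ B' : Set V, B ⊆ B' → B'.Pairwise (VRes E) → B' = B

/-- `l` is (the vertex list of) a directed path from `u` to `v` in `E`. -/
def IsPathList (E : V → V → Prop) (u v : V) (l : List V) : Prop :=
  l.Chain' E ∧ l.head? = some u ∧ l.getLast? = some v

/-- The internal vertices of a path given as a vertex list. -/
def internalsL (l : List V) : List V := (l.drop 1).dropLast

/-- The edges of a path given as a vertex list. -/
def edgesOfL (l : List V) : List (V × V) := l.zip l.tail

/-- There exist two internally vertex-disjoint (simple, distinct) paths from `u` to `v`. -/
def TwoVPaths (E : V → V → Prop) (u v : V) : Prop :=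
  ∃ l₁ l₂ : List V, IsPathList E u v l₁ ∧ IsPathList E u v l₂ ∧
    l₁.Nodup ∧ l₂.Nodup ∧ l₁ ≠ l₂ ∧ ∀ x ∈ internalsL l₁, x ∉ internalsL l₂

/-- `u` and `v` are 2-vertex-connected. -/
def TwoVConn (E : V → V → Prop) (u v : V) : Prop :=
  u ≠ v ∧ TwoVPaths E u v ∧ TwoVPaths E v u

/-- There exist two edge-disjoint paths from `u` to `v`. -/
def TwoEPaths (E : V → V → Prop) (u v : V) : Prop :=
  ∃ l₁ l₂ : List V, IsPathList E u v l₁ ∧ IsPathList E u v l₂ ∧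
    ∀ e ∈ edgesOfL l₁, e ∉ edgesOfL l₂

/-- `u` and `v` are 2-edge-connected. -/
def TwoEConn (E : V → V → Prop) (u v : V) : Prop :=
  u ≠ v ∧ TwoEPaths E u v ∧ TwoEPaths E v u

/-- A 2-vertex-connected block. -/
def Is2VBlock (E : V → V → Prop) (B : Set V) : Prop :=
  B.Pairwise (TwoVConn E) ∧ (∃ a ∈ B, ∃ b ∈ B, a ≠ b) ∧
    ∀ B' : Set V, B ⊆ B' → B'.Pairwise (TwoVConn E) → B' = B

/-- A 2-edge-connected block. -/
def Is2EBlock (E : V → V → Prop) (B : Set V) : Prop :=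
  B.Pairwise (TwoEConn E) ∧ (∃ a ∈ B, ∃ b ∈ B, a ≠ b) ∧
    ∀ B' : Set V, B ⊆ B' → B'.Pairwise (TwoEConn E) → B' = B

/-- The digraph `E` is strongly connected. -/
def StronglyConn (E : V → V → Prop) : Prop :=
  ∀ u v, Relation.ReflTransGen E u v

/-- `(a,b)` is a strong bridge of the strongly connected digraph `E`. -/
def IsStrongBridge (E : V → V → Prop) (a b : V) : Prop :=
  E a b ∧ ¬ StronglyConn (delE E a b)

/-- `u` dominates `w` in the flow graph with start vertex `s`:
every path from `s` to `w` contains `u`. -/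
def DomOf (E : V → V → Prop) (s u w : V) : Prop :=
  ∀ l : List V, IsPathList E s w l → u ∈ l

/-- `d` is the immediate dominator of `w` in the flow graph with start `s`:
the proper dominator of `w` dominated by all proper dominators of `w`. -/
def IdomOf (E : V → V → Prop) (s d w : V) : Prop :=
  d ≠ w ∧ DomOf E s d w ∧ ∀ u, u ≠ w → DomOf E s u w → DomOf E s u d

/-- The block graph `F` of the digraph `E`: the bipartite undirected graph on the
vertices of `E` together with its vertex-resilient blocks, a vertex `u` being
adjacent to a block node `B` exactly when `u ∈ B`. -/
def blockGraph (E : V → V → Prop) :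
    SimpleGraph (V ⊕ {B : Set V // IsVRBlock E B}) where
  Adj a b := ∃ u B, u ∈ B.1 ∧
    ((a = Sum.inl u ∧ b = Sum.inr B) ∨ (a = Sum.inr B ∧ b = Sum.inl u))
  symm := by
    refine ⟨?_⟩
    rintro a b ⟨u, B, hm, (⟨rfl, rfl⟩ | ⟨rfl, rfl⟩)⟩
    · exact ⟨u, B, hm, Or.inr ⟨rfl, rfl⟩⟩
    · exact ⟨u, B, hm, Or.inl ⟨rfl, rfl⟩⟩
  loopless := by
    refine ⟨?_⟩
    rintro a ⟨u, B, hm, (⟨rfl, h⟩ | ⟨rfl, h⟩)⟩ <;> simp at h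

namespace Aux

open Relation List

/-- edges of a cons-cons list -/
lemma edges_cons_cons (a b : V) (l : List V) :
    edgesOfL (a :: b :: l) = (a, b) :: edgesOfL (b :: l) := by
  simp [edgesOfL]

lemma edges_nil (a : V) : edgesOfL ([a] : List V) = [] := rfl

/-- every edge of a chain is related -/
lemma rel_of_edge {r : V → V → Prop} :
    ∀ {l : List V}, l.Chain' r → ∀ e ∈ edgesOfL l, r e.1 e.2 := by
  intro l
  induction l with
  | nil => intro _ e he; simp [edgesOfL] at he
  | cons a t ih =>
    intro hc e he
    cases t with
    | nil => simp [edgesOfL] at he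
    | cons b t' =>
      rw [edges_cons_cons] at he
      rcases List.mem_cons.1 he with h | h
      · subst h; exact (List.isChain_cons_cons.1 hc).1
      · exact ih (List.isChain_cons_cons.1 hc).2 e h

lemma chain'_restrict {r r' : V → V → Prop} :
    ∀ {l : List V}, l.Chain' r → (∀ e ∈ edgesOfL l, r' e.1 e.2) → l.Chain' r' := by
  intro l
  induction l with
  | nil => intro _ _; exact List.isChain_nil
  | cons a t ih =>
    intro hc he
    cases t with
    | nil => exact List.isChain_singleton a
    | cons b t' =>
      rw [List.Chain', List.isChain_cons_cons]
      refine ⟨he (a, b) (by rw [edges_cons_cons]; exact List.mem_cons_self), ?_⟩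
      exact ih (List.isChain_cons_cons.1 hc).2 (fun e h => he e (by rw [edges_cons_cons]; exact List.mem_cons_of_mem _ h))

lemma edges_map_fst : ∀ (l : List V), (edgesOfL l).map Prod.fst = l.dropLast := by
  intro l
  induction l with
  | nil => rfl
  | cons a t ih =>
    cases t with
    | nil => rfl
    | cons b t' =>
      rw [edges_cons_cons]
      simp only [List.map_cons, ih]
      rfl

lemma edges_map_snd : ∀ (l : List V), (edgesOfL l).map Prod.snd = l.tail := by
  intro l
  cases l with
  | nil => rfl
  | cons a t =>
    show ((a :: t).zip t).map Prod.snd = t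
    rw [List.map_snd_zip]
    simp

lemma mem_edge {l : List V} {e : V × V} (h : e ∈ edgesOfL l) : e.1 ∈ l ∧ e.2 ∈ l := by
  obtain ⟨x, y⟩ := e
  have := List.of_mem_zip h
  exact ⟨this.1, List.mem_of_mem_tail this.2⟩

lemma edge_index {l : List V} {e : V × V} :
    e ∈ edgesOfL l ↔ ∃ i, ∃ h : i + 1 < l.length, l[i] = e.1 ∧ l[i+1] = e.2 := by
  constructor
  · intro h
    rw [edgesOfL] at h
    rw [List.mem_iff_getElem] at h
    obtain ⟨i, hi, hval⟩ := h
    rw [List.getElem_zip] at hval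
    have hlen : i < l.tail.length := lt_of_lt_of_le hi (by rw [List.length_zip]; exact min_le_right _ _)
    have hl1 : i + 1 < l.length := by
      have := List.length_tail (l := l); omega
    refine ⟨i, hl1, ?_, ?_⟩
    · simpa using congrArg Prod.fst hval
    · rw [← List.getElem_tail (l := l) (i := i) hlen]
      simpa using congrArg Prod.snd hval
  · rintro ⟨i, h, h1, h2⟩
    rw [edgesOfL, List.mem_iff_getElem]
    have hlt : i < (l.zip l.tail).length := by
      rw [List.length_zip, List.length_tail]; omega
    refine ⟨i, hlt, ?_⟩
    rw [List.getElem_zip, List.getElem_tail]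
    rw [h1, h2]

end Aux
namespace Aux
open Relation List

lemma rtg_of_path {r : V → V → Prop} :
    ∀ {l : List V} {a b : V}, l.Chain' r → l.head? = some a → l.getLast? = some b →
    Relation.ReflTransGen r a b := by
  intro l
  induction l with
  | nil => intro a b _ hh _; simp at hh
  | cons x t ih =>
    intro a b hc hh hl
    obtain rfl : x = a := by simpa using hh
    cases t with
    | nil =>
      obtain rfl : x = b := by simpa using hl
      exact Relation.ReflTransGen.refl
    | cons y t' =>
      have h1 : r x y := (List.isChain_cons_cons.1 hc).1
      rw [List.getLast?_cons_cons] at hl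
      exact Relation.ReflTransGen.head h1 (ih (List.isChain_cons_cons.1 hc).2 rfl hl)

/-- extraction of a Nodup path from a walk -/
lemma simple_path_of_rtg {r : V → V → Prop} {a b : V} (h : Relation.ReflTransGen r a b) :
    ∃ l : List V, l.Chain' r ∧ l.head? = some a ∧ l.getLast? = some b ∧ l.Nodup := by
  induction h with
  | refl => exact ⟨[a], List.isChain_singleton a, by simp, by simp, by simp⟩
  | tail _ hbc ih =>
    rename_i x c _
    obtain ⟨l, hc, hh, hl, hnd⟩ := ih
    by_cases hmem : c ∈ l
    · obtain ⟨s, t, rfl⟩ := List.append_of_mem hmem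
      refine ⟨s ++ [c], hc.prefix ⟨t, by simp⟩, ?_, by simp, ?_⟩
      · cases s with
        | nil => simpa using hh
        | cons z s' => simpa using hh
      · have := List.Nodup.sublist (l₁ := s ++ [c]) (by
          exact List.Sublist.append (List.Sublist.refl s) ((List.nil_sublist t).cons₂ c)) hnd
        exact this
    · refine ⟨l ++ [c], ?_, ?_, by simp, by simp [List.nodup_append, hnd, hmem]; intro z hz hzc; exact hmem (hzc ▸ hz)⟩
      · refine List.IsChain.append hc (by simp) ?_
        intro p hp q hq
        obtain rfl : c = q := by simpa using hq
        have hpx : x = p := by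
          rw [hl] at hp; simpa using hp
        rw [← hpx]; exact hbc
      · cases l with
        | nil => simp at hh
        | cons z t => simpa using hh

lemma eq_cons_tail {l : List V} {a : V} (hh : l.head? = some a) : l = a :: l.tail := by
  cases l with
  | nil => simp at hh
  | cons x t => obtain rfl : x = a := by simpa using hh
                rfl

lemma eq_dropLast_concat {l : List V} {b : V} (hl : l.getLast? = some b) :
    l = l.dropLast ++ [b] := by
  have hne : l ≠ [] := by rintro rfl; simp at hl
  have := List.dropLast_concat_getLast hne
  rw [List.getLast?_eq_getLast hne, Option.some_inj] at hl
  rw [hl] at this; exact this.symm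

lemma length_ge_two {l : List V} {a b : V} (hh : l.head? = some a) (hl : l.getLast? = some b)
    (hab : a ≠ b) : 2 ≤ l.length := by
  cases l with
  | nil => simp at hh
  | cons x t =>
    cases t with
    | nil =>
      obtain rfl : x = a := by simpa using hh
      obtain rfl : x = b := by simpa using hl
      exact absurd rfl hab
    | cons y t' => simp

lemma head_not_mem_tail {l : List V} {a : V} (hnd : l.Nodup) (hh : l.head? = some a) :
    a ∉ l.tail := by
  rw [eq_cons_tail hh] at hnd
  exact (List.nodup_cons.1 hnd).1

lemma last_not_mem_dropLast {l : List V} {b : V} (hnd : l.Nodup) (hl : l.getLast? = some b) :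
    b ∉ l.dropLast := by
  intro hmem
  have := eq_dropLast_concat hl
  rw [this] at hnd
  rcases List.nodup_append.1 hnd with ⟨_, _, hdisj⟩
  exact hdisj b hmem b (by simp) rfl

lemma mem_tail_of_ne {l : List V} {a z : V} (hh : l.head? = some a) (hz : z ∈ l) (hne : z ≠ a) :
    z ∈ l.tail := by
  rw [eq_cons_tail hh] at hz
  rcases List.mem_cons.1 hz with rfl | h
  · exact absurd rfl hne
  · exact h

lemma mem_dropLast_of_ne {l : List V} {b z : V} (hl : l.getLast? = some b) (hz : z ∈ l)
    (hne : z ≠ b) : z ∈ l.dropLast := by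
  rw [eq_dropLast_concat hl] at hz
  rcases List.mem_append.1 hz with h | h
  · exact h
  · simp at h; exact absurd h hne

lemma internals_eq {l : List V} : internalsL l = l.tail.dropLast := by
  simp [internalsL]

lemma mem_internals {l : List V} {a b z : V} (hh : l.head? = some a) (hl : l.getLast? = some b)
    (hz : z ∈ l) (hza : z ≠ a) (hzb : z ≠ b) : z ∈ internalsL l := by
  rw [internals_eq]
  have h1 : z ∈ l.tail := mem_tail_of_ne hh hz hza
  have htl : l.tail.getLast? = some b := by
    cases l with
    | nil => simp at hh
    | cons x t =>
      cases t with
      | nil => simp at h1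
      | cons y t' => rw [← hl]; exact (List.getLast?_cons_cons ..).symm
  exact mem_dropLast_of_ne htl h1 hzb

lemma internals_subset {l : List V} : ∀ z ∈ internalsL l, z ∈ l.tail ∧ z ∈ l.dropLast := by
  intro z hz
  rw [internals_eq] at hz
  constructor
  · exact List.dropLast_sublist _ |>.mem hz
  · cases l with
    | nil => simp at hz
    | cons x t =>
      cases t with
      | nil => simp at hz
      | cons y t' =>
        have : (x :: y :: t').dropLast = x :: (y :: t').dropLast := by
          simp
        rw [this]
        exact List.mem_cons_of_mem _ hz

lemma internals_ne {l : List V} {a b z : V} (hnd : l.Nodup) (hh : l.head? = some a)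
    (hl : l.getLast? = some b) (hz : z ∈ internalsL l) : z ≠ a ∧ z ≠ b := by
  obtain ⟨h1, h2⟩ := internals_subset z hz
  constructor
  · rintro rfl; exact head_not_mem_tail hnd hh h1
  · rintro rfl; exact last_not_mem_dropLast hnd hl h2

lemma edges_nodup {l : List V} (hnd : l.Nodup) : (edgesOfL l).Nodup := by
  have h := edges_map_fst l
  have : (l.dropLast).Nodup := hnd.sublist (List.dropLast_sublist l)
  rw [← h] at this
  exact this.of_map _

lemma getElem_head {l : List V} {a : V} (hh : l.head? = some a) (h0 : 0 < l.length) :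
    l[0] = a := by
  cases l with
  | nil => simp at hh
  | cons x t => simpa using hh

lemma getElem_last {l : List V} {b : V} (hl : l.getLast? = some b)
    (h0 : l.length - 1 < l.length) : l[l.length - 1] = b := by
  have hne : l ≠ [] := by rintro rfl; simp at h0
  rw [List.getLast?_eq_getLast hne, Option.some_inj] at hl
  rw [← hl]
  exact (List.getLast_eq_getElem (l := l) hne).symm

lemma edge_ne {l : List V} (hnd : l.Nodup) {e : V × V} (he : e ∈ edgesOfL l) : e.1 ≠ e.2 := by
  obtain ⟨i, h, h1, h2⟩ := edge_index.1 he
  intro hcon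
  rw [← h1, ← h2] at hcon
  have := (hnd.getElem_inj_iff (hi := by omega) (hj := h)).1 hcon
  omega

lemma edge_head_last {l : List V} (hnd : l.Nodup) {a b : V} (hh : l.head? = some a)
    (hl : l.getLast? = some b) (he : (a, b) ∈ edgesOfL l) : l = [a, b] := by
  obtain ⟨i, h, h1, h2⟩ := edge_index.1 he
  have h0 : l[0] = a := getElem_head hh (by omega)
  have hlast : l[l.length - 1] = b := getElem_last hl (by omega)
  have hi0 : i = 0 := by
    have := (hnd.getElem_inj_iff (hi := by omega) (hj := (by omega : 0 < l.length))).1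
      (h1.trans h0.symm)
    omega
  have hil : i + 1 = l.length - 1 := by
    have := (hnd.getElem_inj_iff (hi := h) (hj := (by omega : l.length - 1 < l.length))).1
      (h2.trans hlast.symm)
    omega
  have hlen : l.length = 2 := by omega
  subst hi0
  cases l with
  | nil => simp at hlen
  | cons x t =>
    cases t with
    | nil => simp at hlen
    | cons y t' =>
      cases t' with
      | nil =>
        simp at h1 h2
        rw [h1, h2]
      | cons z t'' => simp at hlen

lemma delV_avoid {E : V → V → Prop} {w : V} :
    ∀ {l : List V}, l.Chain' (delV E w) → 2 ≤ l.length → ∀ z ∈ l, z ≠ w := by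
  intro l
  induction l with
  | nil => intro _ h; simp at h
  | cons a t ih =>
    intro hc _ z hz
    cases t with
    | nil => simp at *
    | cons b t' =>
      have he : delV E w a b := (List.isChain_cons_cons.1 hc).1
      rcases List.mem_cons.1 hz with rfl | h
      · exact he.2.1
      · cases t' with
        | nil =>
          obtain rfl : z = b := by simpa using h
          exact he.2.2
        | cons c t'' =>
          exact ih (List.isChain_cons_cons.1 hc).2 (by simp) z h

lemma delV_mono {E : V → V → Prop} {w : V} {l : List V} (h : l.Chain' (delV E w)) :
    l.Chain' E := h.imp (fun _ _ hab => hab.1)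

lemma delE_mono {E : V → V → Prop} {a b : V} {l : List V} (h : l.Chain' (delE E a b)) :
    l.Chain' E := h.imp (fun _ _ hab => hab.1)

lemma edge_fst_mem_dropLast {l : List V} {e : V × V} (he : e ∈ edgesOfL l) :
    e.1 ∈ l.dropLast := by
  rw [← edges_map_fst l]
  exact List.mem_map_of_mem he

lemma edge_snd_mem_tail {l : List V} {e : V × V} (he : e ∈ edgesOfL l) :
    e.2 ∈ l.tail := by
  rw [← edges_map_snd l]
  exact List.mem_map_of_mem he

section TwoV

variable {E : V → V → Prop} {x y : V}

lemma resV_of_two (hxy : x ≠ y)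
    {l₁ l₂ : List V} (h₁ : IsPathList E x y l₁) (h₂ : IsPathList E x y l₂)
    (hn₁ : l₁.Nodup) (hn₂ : l₂.Nodup)
    (hdisj : ∀ z ∈ internalsL l₁, z ∉ internalsL l₂) :
    ∀ w, w ≠ x → w ≠ y → Relation.ReflTransGen (delV E w) x y := by
  intro w hwx hwy
  obtain ⟨hc₁, hh₁, hl₁⟩ := h₁
  obtain ⟨hc₂, hh₂, hl₂⟩ := h₂
  have key : w ∉ l₁ ∨ w ∉ l₂ := by
    by_contra hcon
    push_neg at hcon
    exact hdisj w (mem_internals hh₁ hl₁ hcon.1 hwx hwy)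
      (mem_internals hh₂ hl₂ hcon.2 hwx hwy)
  rcases key with hw | hw
  · exact rtg_of_path (chain'_restrict hc₁ (fun e he =>
      ⟨rel_of_edge hc₁ e he,
       fun hcon => hw (hcon ▸ (mem_edge he).1),
       fun hcon => hw (hcon ▸ (mem_edge he).2)⟩)) hh₁ hl₁
  · exact rtg_of_path (chain'_restrict hc₂ (fun e he =>
      ⟨rel_of_edge hc₂ e he,
       fun hcon => hw (hcon ▸ (mem_edge he).1),
       fun hcon => hw (hcon ▸ (mem_edge he).2)⟩)) hh₂ hl₂

lemma shared_mem (hxy : x ≠ y)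
    {l₁ l₂ : List V} (h₁ : IsPathList E x y l₁) (h₂ : IsPathList E x y l₂)
    (hdisj : ∀ z ∈ internalsL l₁, z ∉ internalsL l₂) :
    ∀ z, z ∈ l₁ → z ∈ l₂ → z = x ∨ z = y := by
  intro z hz₁ hz₂
  by_contra hcon
  push_neg at hcon
  exact hdisj z (mem_internals h₁.2.1 h₁.2.2 hz₁ hcon.1 hcon.2)
    (mem_internals h₂.2.1 h₂.2.2 hz₂ hcon.1 hcon.2)

lemma edge_not_shared (hxy : x ≠ y)
    {l₁ l₂ : List V} (h₁ : IsPathList E x y l₁) (h₂ : IsPathList E x y l₂)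
    (hn₁ : l₁.Nodup) (hn₂ : l₂.Nodup) (hne : l₁ ≠ l₂)
    (hdisj : ∀ z ∈ internalsL l₁, z ∉ internalsL l₂) :
    ∀ e ∈ edgesOfL l₁, e ∉ edgesOfL l₂ := by
  rintro ⟨a, b⟩ he₁ he₂
  have ha := shared_mem hxy h₁ h₂ hdisj a (mem_edge he₁).1 (mem_edge he₂).1
  have hb := shared_mem hxy h₁ h₂ hdisj b (mem_edge he₁).2 (mem_edge he₂).2
  have hne' : a ≠ b := edge_ne hn₁ he₁
  rcases ha with rfl | rfl
  · rcases hb with rfl | rfl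
    · exact hne' rfl
    · -- edge (x,y): both lists are [x,y]
      have e₁ := edge_head_last hn₁ h₁.2.1 h₁.2.2 he₁
      have e₂ := edge_head_last hn₂ h₂.2.1 h₂.2.2 he₂
      exact hne (e₁.trans e₂.symm)
  · -- a = y is the source of an edge of l₁ : contradiction with last
    exact last_not_mem_dropLast hn₁ h₁.2.2 (edge_fst_mem_dropLast he₁)

lemma resE_of_two (hxy : x ≠ y)
    {l₁ l₂ : List V} (h₁ : IsPathList E x y l₁) (h₂ : IsPathList E x y l₂)
    (hn₁ : l₁.Nodup) (hn₂ : l₂.Nodup) (hne : l₁ ≠ l₂)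
    (hdisj : ∀ z ∈ internalsL l₁, z ∉ internalsL l₂) :
    ∀ a b, Relation.ReflTransGen (delE E a b) x y := by
  intro a b
  by_cases hab : (a, b) ∈ edgesOfL l₁
  · have h2 : (a, b) ∉ edgesOfL l₂ := edge_not_shared hxy h₁ h₂ hn₁ hn₂ hne hdisj _ hab
    exact rtg_of_path (chain'_restrict h₂.1 (fun e he =>
      ⟨rel_of_edge h₂.1 e he, fun hcon => h2 (by
        obtain ⟨h1, h2'⟩ := hcon
        have : e = (a, b) := Prod.ext h1 h2'
        exact this ▸ he)⟩)) h₂.2.1 h₂.2.2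
  · exact rtg_of_path (chain'_restrict h₁.1 (fun e he =>
      ⟨rel_of_edge h₁.1 e he, fun hcon => hab (by
        obtain ⟨h1, h2'⟩ := hcon
        have : e = (a, b) := Prod.ext h1 h2'
        exact this ▸ he)⟩)) h₁.2.1 h₁.2.2

end TwoV

section Flow

variable {W : Type*}

open Classical in
noncomputable def outd (A : Finset (W × W)) (w : W) : ℕ :=
  (A.filter (fun e => e.1 = w)).card

open Classical in
noncomputable def ind (A : Finset (W × W)) (w : W) : ℕ :=
  (A.filter (fun e => e.2 = w)).card

open Classical in
lemma outd_erase (A : Finset (W × W)) (e : W × W) (he : e ∈ A) (w : W) :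
    outd (A.erase e) w = if e.1 = w then outd A w - 1 else outd A w := by
  unfold outd
  rw [Finset.filter_erase]
  split
  · rename_i h
    rw [Finset.card_erase_of_mem (Finset.mem_filter.2 ⟨he, by simpa using h⟩)]
  · rename_i h
    rw [Finset.erase_eq_of_notMem (fun hc => h (by simpa using (Finset.mem_filter.1 hc).2))]

open Classical in
lemma ind_erase (A : Finset (W × W)) (e : W × W) (he : e ∈ A) (w : W) :
    ind (A.erase e) w = if e.2 = w then ind A w - 1 else ind A w := by
  unfold ind
  rw [Finset.filter_erase]
  split
  · rename_i h
    rw [Finset.card_erase_of_mem (Finset.mem_filter.2 ⟨he, by simpa using h⟩)]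
  · rename_i h
    rw [Finset.erase_eq_of_notMem (fun hc => h (by simpa using (Finset.mem_filter.1 hc).2))]

open Classical in
lemma ind_pos (A : Finset (W × W)) (e : W × W) (he : e ∈ A) : 1 ≤ ind A e.2 :=
  Finset.card_pos.2 ⟨e, Finset.mem_filter.2 ⟨he, by simp⟩⟩

open Classical in
lemma outd_pos (A : Finset (W × W)) (e : W × W) (he : e ∈ A) : 1 ≤ outd A e.1 :=
  Finset.card_pos.2 ⟨e, Finset.mem_filter.2 ⟨he, by simp⟩⟩

open Classical in
lemma walk_extract : ∀ (n : ℕ) (A : Finset (W × W)), A.card = n → ∀ (t : W),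
    (∀ w, w ≠ t → ind A w ≤ outd A w) → ∀ s, ind A s < outd A s →
    Relation.ReflTransGen (fun a b => (a, b) ∈ A) s t := by
  intro n
  induction n using Nat.strong_induction_on with
  | _ n IH =>
    intro A hcard t hbal s hs
    by_cases hst : s = t
    · exact hst ▸ Relation.ReflTransGen.refl
    have hpos : 0 < outd A s := lt_of_le_of_lt (Nat.zero_le _) hs
    obtain ⟨e, hef⟩ := Finset.card_pos.1 hpos
    have heA : e ∈ A := (Finset.mem_filter.1 hef).1
    have he1 : e.1 = s := by simpa using (Finset.mem_filter.1 hef).2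
    set w := e.2 with hw
    by_cases hwt : w = t
    · exact Relation.ReflTransGen.single (by rw [← he1, ← hwt]; exact heA)
    have hApos : 0 < A.card := Finset.card_pos.2 ⟨e, heA⟩
    set A' := A.erase e with hA'
    have hcard' : A'.card = A.card - 1 := Finset.card_erase_of_mem heA
    have hlt : A'.card < n := by omega
    have hindS : 1 ≤ ind A w := ind_pos A e heA
    by_cases hws : w = s
    · -- self loop
      have hbal' : ∀ z, z ≠ t → ind A' z ≤ outd A' z := by
        intro z hz
        rw [outd_erase A e heA, ind_erase A e heA]
        have hb := hbal z hz
        have he2s : e.2 = s := hw ▸ hws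
        by_cases hzs : z = s
        · have h1 : e.1 = z := by rw [he1, hzs]
          have h2 : e.2 = z := by rw [he2s, hzs]
          rw [if_pos h1, if_pos h2]
          have hip : 1 ≤ ind A e.2 := ind_pos A e heA
          rw [h2] at hip
          omega
        · have h1 : ¬ e.1 = z := by rw [he1]; exact fun hc => hzs hc.symm
          have h2 : ¬ e.2 = z := by rw [he2s]; exact fun hc => hzs hc.symm
          rw [if_neg h1, if_neg h2]
          exact hb
      have hs' : ind A' s < outd A' s := by
        have h2 : e.2 = s := hw ▸ hws
        rw [outd_erase A e heA, ind_erase A e heA, if_pos he1, if_pos h2]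
        rw [hws] at hindS
        omega
      exact Relation.ReflTransGen.mono (fun a b hab => Finset.mem_of_mem_erase hab) _ _ (IH _ hlt A' rfl t hbal' s hs')
    · -- move to w
      have hbal' : ∀ z, z ≠ t → ind A' z ≤ outd A' z := by
        intro z hz
        rw [outd_erase A e heA, ind_erase A e heA]
        have hb := hbal z hz
        by_cases hzs : z = s
        · have h1 : e.1 = z := by rw [he1, hzs]
          have h2 : ¬ e.2 = z := fun hc => hws (hw.trans (hc.trans hzs))
          rw [if_pos h1, if_neg h2, hzs]
          omega
        · have h1 : ¬ e.1 = z := by rw [he1]; exact fun hc => hzs hc.symm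
          rw [if_neg h1]
          by_cases h2 : e.2 = z
          · rw [if_pos h2]; omega
          · rw [if_neg h2]; exact hb
      have hs' : ind A' w < outd A' w := by
        rw [outd_erase A e heA, ind_erase A e heA]
        have h1 : e.1 ≠ w := by rw [he1]; exact fun hc => hws hc.symm
        simp [h1, ← hw]
        have := hbal w hwt
        omega
      have step : Relation.ReflTransGen (fun a b => (a, b) ∈ A) w t :=
        Relation.ReflTransGen.mono (fun a b hab => Finset.mem_of_mem_erase hab) _ _ (IH _ hlt A' rfl t hbal' w hs')
      exact Relation.ReflTransGen.head (by rw [← he1, hw]; exact heA) step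

end Flow

section Deg

variable {W : Type*}

open Classical in
noncomputable def pEdges (l : List W) : Finset (W × W) := (edgesOfL l).toFinset

open Classical in
lemma mem_pEdges {l : List W} {e : W × W} : e ∈ pEdges l ↔ e ∈ edgesOfL l := by
  simp [pEdges]

open Classical in
lemma filter_eq_length {w : W} : ∀ {l : List W}, l.Nodup →
    ((l.filter (fun z => z = w)).length = if w ∈ l then 1 else 0) := by
  intro l
  induction l with
  | nil => simp
  | cons a t ih =>
    intro hnd
    have hnd' := (List.nodup_cons.1 hnd).2
    by_cases haw : a = w
    · subst haw
      have hna : a ∉ t := (List.nodup_cons.1 hnd).1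
      rw [List.filter_cons_of_pos (by simp), List.length_cons, ih hnd',
        if_neg hna, if_pos (List.mem_cons_self)]
    · rw [List.filter_cons_of_neg (by simp [haw]), ih hnd']
      have hiff : w ∈ a :: t ↔ w ∈ t := by
        rw [List.mem_cons]
        constructor
        · rintro (rfl | h)
          · exact absurd rfl haw
          · exact h
        · exact Or.inr
      simp [hiff]

open Classical in
lemma toFinset_filter' {α : Type*} [DecidableEq α] (l : List α) (p : α → Prop) :
    l.toFinset.filter p = (l.filter (fun a => decide (p a))).toFinset := by
  ext a; simp

open Classical in
lemma path_outd {l : List W} (hnd : l.Nodup) (w : W) :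
    outd (pEdges l) w = if w ∈ l.dropLast then 1 else 0 := by
  have hne := edges_nodup hnd
  unfold outd pEdges
  rw [toFinset_filter', List.toFinset_card_of_nodup (hne.filter _)]
  rw [← List.countP_eq_length_filter,
    show (fun (e : W × W) => decide (e.1 = w)) = ((fun z => decide (z = w)) ∘ Prod.fst) from rfl,
    ← List.countP_map, edges_map_fst, List.countP_eq_length_filter,
    filter_eq_length (hnd.sublist (List.dropLast_sublist l))]

open Classical in
lemma path_ind {l : List W} (hnd : l.Nodup) (w : W) :
    ind (pEdges l) w = if w ∈ l.tail then 1 else 0 := by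
  have hne := edges_nodup hnd
  unfold ind pEdges
  rw [toFinset_filter', List.toFinset_card_of_nodup (hne.filter _)]
  rw [← List.countP_eq_length_filter,
    show (fun (e : W × W) => decide (e.2 = w)) = ((fun z => decide (z = w)) ∘ Prod.snd) from rfl,
    ← List.countP_map, edges_map_snd, List.countP_eq_length_filter,
    filter_eq_length (hnd.sublist (List.tail_sublist l))]

end Deg

section Deg2

variable {W : Type*}

open Classical in
lemma outd_union {A B : Finset (W × W)} (h : Disjoint A B) (w : W) :
    outd (A ∪ B) w = outd A w + outd B w := by
  unfold outd
  rw [Finset.filter_union, Finset.card_union_of_disjoint (Finset.disjoint_filter_filter h)]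

open Classical in
lemma ind_union {A B : Finset (W × W)} (h : Disjoint A B) (w : W) :
    ind (A ∪ B) w = ind A w + ind B w := by
  unfold ind
  rw [Finset.filter_union, Finset.card_union_of_disjoint (Finset.disjoint_filter_filter h)]

open Classical in
lemma outd_sdiff {A B : Finset (W × W)} (h : B ⊆ A) (w : W) :
    outd (A \ B) w + outd B w = outd A w := by
  rw [← outd_union Finset.sdiff_disjoint w, Finset.sdiff_union_of_subset h]

open Classical in
lemma ind_sdiff {A B : Finset (W × W)} (h : B ⊆ A) (w : W) :
    ind (A \ B) w + ind B w = ind A w := by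
  rw [← ind_union Finset.sdiff_disjoint w, Finset.sdiff_union_of_subset h]

open Classical in
lemma outd_swap (B : Finset (W × W)) (w : W) :
    outd (B.image Prod.swap) w = ind B w := by
  unfold outd ind
  rw [Finset.filter_image, Finset.card_image_of_injective _ Prod.swap_injective]
  congr 1

open Classical in
lemma ind_swap (B : Finset (W × W)) (w : W) :
    ind (B.image Prod.swap) w = outd B w := by
  unfold outd ind
  rw [Finset.filter_image, Finset.card_image_of_injective _ Prod.swap_injective]
  congr 1

end Deg2

section Cross

variable {W : Type*}

lemma rtg_cross {r : W → W → Prop} {S : W → Prop} {a b : W}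
    (h : Relation.ReflTransGen r a b) (ha : S a) (hb : ¬ S b) :
    ∃ p q, r p q ∧ S p ∧ ¬ S q := by
  induction h with
  | refl => exact absurd ha hb
  | @tail c d hxc hcd ih =>
    by_cases hc : S c
    · exact ⟨c, d, hcd, hc, hb⟩
    · exact ih hc

lemma list_cross {S : W → Prop} :
    ∀ {l : List W} {a b : W}, l.head? = some a → l.getLast? = some b → S a → ¬ S b →
    ∃ e ∈ edgesOfL l, S e.1 ∧ ¬ S e.2 := by
  intro l
  induction l with
  | nil => intro a b hh; simp at hh
  | cons x u ih =>
    intro a b hh hl ha hb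
    obtain rfl : x = a := by simpa using hh
    cases u with
    | nil =>
      obtain rfl : x = b := by simpa using hl
      exact absurd ha hb
    | cons y u' =>
      rw [List.getLast?_cons_cons] at hl
      by_cases hy : S y
      · obtain ⟨e, he, h1, h2⟩ := ih (a := y) rfl hl hy hb
        exact ⟨e, by rw [edges_cons_cons]; exact List.mem_cons_of_mem _ he, h1, h2⟩
      · exact ⟨(x, y), by rw [edges_cons_cons]; exact List.mem_cons_self, ha, hy⟩

lemma no_return {S : W → Prop} {l : List W}
    (hcl : ∀ e ∈ edgesOfL l, ¬ S e.1 → ¬ S e.2) :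
    ∀ i j (hij : i ≤ j) (hj : j < l.length), ¬ S (l[i]'(lt_of_le_of_lt hij hj)) → ¬ S (l[j]'hj) := by
  intro i j
  induction j with
  | zero =>
    intro hij hj h
    obtain rfl : i = 0 := by omega
    exact h
  | succ k ih =>
    intro hij hj h
    by_cases hik : i = k + 1
    · subst hik; exact h
    · have hik' : i ≤ k := by omega
      have hk : k < l.length := by omega
      have hnk := ih hik' hk h
      have hedge : (l[k]'hk, l[k+1]'hj) ∈ edgesOfL l := edge_index.2 ⟨k, hj, rfl, rfl⟩
      exact hcl _ hedge hnk

end Cross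

section MengerE

variable {W : Type*}

open Classical in
lemma mengerE {F : W → W → Prop} {s t : W} (hst : s ≠ t)
    (hres : ∀ a b : W, Relation.ReflTransGen (delE F a b) s t) :
    ∃ l₁ l₂ : List W, IsPathList F s t l₁ ∧ IsPathList F s t l₂ ∧
      l₁.Nodup ∧ l₂.Nodup ∧ ∀ e ∈ edgesOfL l₁, e ∉ edgesOfL l₂ := by
  obtain ⟨P, hPc0, hPh, hPl, hPnd⟩ := simple_path_of_rtg (Relation.ReflTransGen.mono
    (fun a b (h : delE F s s a b) => h.1) _ _ (hres s s))
  set R : W → W → Prop := fun p q => (F p q ∧ (p, q) ∉ edgesOfL P) ∨ ((q, p) ∈ edgesOfL P)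
    with hRdef
  have hPc : P.Chain' F := hPc0
  -- Step 1: residual reachability
  have hS : Relation.ReflTransGen R s t := by
    by_contra hcon
    set S : W → Prop := fun p => Relation.ReflTransGen R s p with hSdef
    have hSs : S s := Relation.ReflTransGen.refl
    have hclosed : ∀ p q, R p q → S p → S q := fun p q hr hp => hp.tail hr
    have hnoret : ∀ e ∈ edgesOfL P, ¬ S e.1 → ¬ S e.2 := by
      intro e he h1 h2
      exact h1 (hclosed e.2 e.1 (Or.inr (by simpa using he)) h2)
    obtain ⟨e0, he0, hS1, hS2⟩ := list_cross hPh hPl hSs hcon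
    obtain ⟨i, hi, hi1, hi2⟩ := edge_index.1 he0
    obtain ⟨p, q, hpq, hSp, hSq⟩ := rtg_cross (hres e0.1 e0.2) hSs hcon
    obtain ⟨hFpq, hnepq⟩ := hpq
    have hmem : (p, q) ∈ edgesOfL P := by
      by_contra hno
      exact hSq (hclosed p q (Or.inl ⟨hFpq, hno⟩) hSp)
    obtain ⟨j, hj, hj1, hj2⟩ := edge_index.1 hmem
    have hij : i = j := by
      rcases lt_trichotomy i j with h | h | h
      · exfalso
        have h1 : ¬ S (P[i+1]'hi) := by rw [hi2]; exact hS2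
        have h2 := no_return hnoret (i+1) j (by omega) (by omega) h1
        rw [hj1] at h2
        exact h2 hSp
      · exact h
      · exfalso
        have h1 : ¬ S (P[j+1]'hj) := by rw [hj2]; exact hSq
        have h2 := no_return hnoret (j+1) i (by omega) (by omega) h1
        rw [hi1] at h2
        exact h2 hS1
    subst hij
    exact hnepq ⟨hj1.symm.trans hi1, hj2.symm.trans hi2⟩
  obtain ⟨Q, hQc, hQh, hQl, hQnd⟩ := simple_path_of_rtg hS
  classical
  set EP : Finset (W × W) := pEdges P with hEP
  set EQ : Finset (W × W) := pEdges Q with hEQ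
  set Crev : Finset (W × W) := EP.filter (fun e => e.swap ∈ EQ) with hCrev
  set EQf : Finset (W × W) := EQ.filter (fun e => e.swap ∉ EP) with hEQf
  set FS : Finset (W × W) := (EP \ Crev) ∪ EQf with hFS
  have hQR : ∀ e ∈ EQ, R e.1 e.2 := fun e he => rel_of_edge hQc e (mem_pEdges.1 he)
  have hPF : ∀ e ∈ EP, F e.1 e.2 := fun e he => rel_of_edge hPc e (mem_pEdges.1 he)
  have hEQf_notP : ∀ e ∈ EQf, e ∉ EP ∧ F e.1 e.2 := by
    intro e he
    obtain ⟨heQ, hswap⟩ := Finset.mem_filter.1 he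
    rcases hQR e heQ with ⟨hF, hnp⟩ | hswap'
    · exact ⟨fun hc => hnp (by simpa using mem_pEdges.1 hc), hF⟩
    · exact absurd (mem_pEdges.2 hswap') hswap
  have hCsub : Crev ⊆ EP := Finset.filter_subset _ _
  have hQfsub : EQf ⊆ EQ := Finset.filter_subset _ _
  have hdisj : Disjoint (EP \ Crev) EQf := by
    rw [Finset.disjoint_left]
    intro e he1 he2
    exact (hEQf_notP e he2).1 (Finset.mem_sdiff.1 he1).1
  have hFsub : ∀ e ∈ FS, F e.1 e.2 := by
    intro e he
    rcases Finset.mem_union.1 he with h | h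
    · exact hPF e (Finset.mem_sdiff.1 h).1
    · exact (hEQf_notP e h).2
  have hCimg : Crev = (EQ \ EQf).image Prod.swap := by
    ext e
    simp only [hCrev, hEQf, Finset.mem_filter, Finset.mem_image, Finset.mem_sdiff]
    constructor
    · rintro ⟨h1, h2⟩
      exact ⟨e.swap, ⟨h2, fun hc => hc.2 (by simpa using h1)⟩, by simp⟩
    · rintro ⟨f, ⟨hf1, hf2⟩, rfl⟩
      refine ⟨?_, by simpa using hf1⟩
      by_contra hc
      exact hf2 ⟨hf1, hc⟩
  -- degree equations
  have q1 : ∀ w, outd FS w + outd Crev w = outd EP w + outd EQf w := by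
    intro w
    have e1 := outd_sdiff hCsub w
    rw [hFS, outd_union hdisj w]
    omega
  have q2 : ∀ w, ind FS w + ind Crev w = ind EP w + ind EQf w := by
    intro w
    have e1 := ind_sdiff hCsub w
    rw [hFS, ind_union hdisj w]
    omega
  have q3 : ∀ w, outd Crev w + ind EQf w = ind EQ w := by
    intro w
    rw [hCimg, outd_swap]
    exact ind_sdiff hQfsub w
  have q4 : ∀ w, ind Crev w + outd EQf w = outd EQ w := by
    intro w
    rw [hCimg, ind_swap]
    exact outd_sdiff hQfsub w
  -- endpoint membership facts
  have hmemP : s ∈ P ∧ t ∈ P := by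
    constructor
    · rw [eq_cons_tail hPh]; exact List.mem_cons_self
    · rw [eq_dropLast_concat hPl]; simp
  have hmemQ : s ∈ Q ∧ t ∈ Q := by
    constructor
    · rw [eq_cons_tail hQh]; exact List.mem_cons_self
    · rw [eq_dropLast_concat hQl]; simp
  have hPineq : ∀ w, w ≠ t → ind EP w ≤ outd EP w := by
    intro w hwt
    rw [hEP, path_outd hPnd w, path_ind hPnd w]
    split_ifs with h1 h2
    · omega
    · exact absurd (mem_dropLast_of_ne hPl (List.mem_of_mem_tail h1) hwt) h2
    · omega
    · omega
  have hQineq : ∀ w, w ≠ t → ind EQ w ≤ outd EQ w := by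
    intro w hwt
    rw [hEQ, path_outd hQnd w, path_ind hQnd w]
    split_ifs with h1 h2
    · omega
    · exact absurd (mem_dropLast_of_ne hQl (List.mem_of_mem_tail h1) hwt) h2
    · omega
    · omega
  have hPs : outd EP s = 1 ∧ ind EP s = 0 := by
    rw [hEP, path_outd hPnd s, path_ind hPnd s,
      if_pos (mem_dropLast_of_ne hPl hmemP.1 hst), if_neg (head_not_mem_tail hPnd hPh)]
    exact ⟨rfl, rfl⟩
  have hQs : outd EQ s = 1 ∧ ind EQ s = 0 := by
    rw [hEQ, path_outd hQnd s, path_ind hQnd s,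
      if_pos (mem_dropLast_of_ne hQl hmemQ.1 hst), if_neg (head_not_mem_tail hQnd hQh)]
    exact ⟨rfl, rfl⟩
  -- first extraction
  have hpre1 : ∀ w, w ≠ t → ind FS w ≤ outd FS w := by
    intro w hwt
    have := q1 w; have := q2 w; have := q3 w; have := q4 w
    have := hPineq w hwt; have := hQineq w hwt
    omega
  have hpre2 : ind FS s < outd FS s := by
    have := q1 s; have := q2 s; have := q3 s; have := q4 s
    have h5 := hPs; have h6 := hQs
    omega
  obtain ⟨P1, hP1c, hP1h, hP1l, hP1nd⟩ :=
    simple_path_of_rtg (walk_extract FS.card FS rfl t hpre1 s hpre2)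
  have hP1sub : pEdges P1 ⊆ FS := by
    intro e he
    have := rel_of_edge hP1c e (mem_pEdges.1 he)
    simpa using this
  set A1 : Finset (W × W) := FS \ pEdges P1 with hA1
  have q5 : ∀ w, outd A1 w + outd (pEdges P1) w = outd FS w := fun w => outd_sdiff hP1sub w
  have q6 : ∀ w, ind A1 w + ind (pEdges P1) w = ind FS w := fun w => ind_sdiff hP1sub w
  have hmemP1 : s ∈ P1 ∧ t ∈ P1 := by
    constructor
    · rw [eq_cons_tail hP1h]; exact List.mem_cons_self
    · rw [eq_dropLast_concat hP1l]; simp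
  have hP1ineq : ∀ w, w ≠ t → ind (pEdges P1) w ≤ outd (pEdges P1) w := by
    intro w hwt
    rw [path_outd hP1nd w, path_ind hP1nd w]
    split_ifs with h1 h2
    · omega
    · exact absurd (mem_dropLast_of_ne hP1l (List.mem_of_mem_tail h1) hwt) h2
    · omega
    · omega
  have hP1outle : ∀ w, outd (pEdges P1) w ≤ 1 := by
    intro w
    rw [path_outd hP1nd w]
    split_ifs <;> omega
  have hP1indle : ∀ w, w ≠ s → outd (pEdges P1) w ≤ ind (pEdges P1) w := by
    intro w hws
    rw [path_outd hP1nd w, path_ind hP1nd w]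
    split_ifs with h1 h2
    · omega
    · exact absurd (mem_tail_of_ne hP1h (List.dropLast_sublist _ |>.mem h1) hws) h2
    · omega
    · omega
  have hP1s : outd (pEdges P1) s = 1 ∧ ind (pEdges P1) s = 0 := by
    rw [path_outd hP1nd s, path_ind hP1nd s,
      if_pos (mem_dropLast_of_ne hP1l hmemP1.1 hst), if_neg (head_not_mem_tail hP1nd hP1h)]
    exact ⟨rfl, rfl⟩
  have hpre1' : ∀ w, w ≠ t → ind A1 w ≤ outd A1 w := by
    intro w hwt
    have := q1 w; have := q2 w; have := q3 w; have := q4 w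
    have := q5 w; have := q6 w
    have := hPineq w hwt; have := hQineq w hwt; have := hP1ineq w hwt
    by_cases hws : w = s
    · subst hws
      have h5 := hPs; have h6 := hQs; have h7 := hP1s
      omega
    · have h8 : ind EP w ≥ outd EP w := by
        rw [hEP, path_outd hPnd w, path_ind hPnd w]
        by_cases h1 : w ∈ P.dropLast
        · have h2 : w ∈ P.tail := mem_tail_of_ne hPh (List.dropLast_sublist _ |>.mem h1) hws
          rw [if_pos h1, if_pos h2]
        · rw [if_neg h1]; split_ifs <;> omega
      have h9 : ind EQ w ≥ outd EQ w := by
        rw [hEQ, path_outd hQnd w, path_ind hQnd w]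
        by_cases h1 : w ∈ Q.dropLast
        · have h2 : w ∈ Q.tail := mem_tail_of_ne hQh (List.dropLast_sublist _ |>.mem h1) hws
          rw [if_pos h1, if_pos h2]
        · rw [if_neg h1]; split_ifs <;> omega
      have := hP1indle w hws
      omega
  have hpre2' : ind A1 s < outd A1 s := by
    have := q1 s; have := q2 s; have := q3 s; have := q4 s
    have := q5 s; have := q6 s
    have h5 := hPs; have h6 := hQs; have h7 := hP1s
    omega
  obtain ⟨P2, hP2c, hP2h, hP2l, hP2nd⟩ :=
    simple_path_of_rtg (walk_extract A1.card A1 rfl t hpre1' s hpre2')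
  have hP2sub : ∀ e ∈ edgesOfL P2, e ∈ A1 := by
    intro e he
    have := rel_of_edge hP2c e he
    simpa using this
  refine ⟨P1, P2, ⟨?_, hP1h, hP1l⟩, ⟨?_, hP2h, hP2l⟩, hP1nd, hP2nd, ?_⟩
  · exact chain'_restrict hP1c (fun e he => hFsub e (by simpa using rel_of_edge hP1c e he))
  · refine chain'_restrict hP2c (fun e he => hFsub e ?_)
    have := hP2sub e he
    rw [hA1] at this
    exact (Finset.mem_sdiff.1 this).1
  · intro e he1 he2
    have h2 := hP2sub e he2
    rw [hA1] at h2
    exact (Finset.mem_sdiff.1 h2).2 (mem_pEdges.2 he1)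

end MengerE

section Split

def Es (E : V → V → Prop) : (V × Bool) → (V × Bool) → Prop :=
  fun p q => (p.2 = true ∧ q.2 = false ∧ E p.1 q.1) ∨ (p.2 = false ∧ q.2 = true ∧ p.1 = q.1)

lemma encode_reach {E : V → V → Prop} {y : V} (e : (V × Bool) × (V × Bool)) :
    ∀ (M : List V) (a : V), (a :: M).Chain' E → (a :: M).getLast? = some y → M ≠ [] →
    (∀ pq ∈ edgesOfL (a :: M), ((pq.1, true), (pq.2, false)) ≠ e) →
    (∀ w ∈ internalsL (a :: M), ((w, false), (w, true)) ≠ e) →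
    Relation.ReflTransGen (delE (Es E) e.1 e.2) (a, true) (y, false) := by
  intro M
  induction M with
  | nil => intro a _ _ h; exact absurd rfl h
  | cons b M' ih =>
    intro a hc hl _ hedges hints
    have hEab : E a b := (List.isChain_cons_cons.1 hc).1
    have hne1 : ((a, true), (b, false)) ≠ e :=
      hedges (a, b) (by rw [edges_cons_cons]; exact List.mem_cons_self)
    have hstep1 : delE (Es E) e.1 e.2 (a, true) (b, false) := by
      exact ⟨Or.inl ⟨rfl, rfl, hEab⟩, fun hcon => hne1 (Prod.ext hcon.1 hcon.2)⟩
    cases M' with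
    | nil =>
      obtain rfl : b = y := by simpa using hl
      exact Relation.ReflTransGen.single hstep1
    | cons c M'' =>
      have hbint : b ∈ internalsL (a :: b :: c :: M'') := by
        rw [internals_eq]
        simp
      have hne2 : ((b, false), (b, true)) ≠ e := hints b hbint
      have hstep2 : delE (Es E) e.1 e.2 (b, false) (b, true) := by
        exact ⟨Or.inr ⟨rfl, rfl, rfl⟩, fun hcon => hne2 (Prod.ext hcon.1 hcon.2)⟩
      have hrec := ih b (List.isChain_cons_cons.1 hc).2
        (by rw [← hl]; exact (List.getLast?_cons_cons ..).symm) (by simp)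
        (fun pq hpq => hedges pq (by rw [edges_cons_cons]; exact List.mem_cons_of_mem _ hpq))
        (fun w hw => hints w (by
          rw [internals_eq] at hw ⊢
          simp only [List.tail_cons] at hw ⊢
          have : (b :: c :: M'').dropLast = b :: (c :: M'').dropLast := by simp
          rw [this]
          exact List.mem_cons_of_mem _ hw))
      exact (Relation.ReflTransGen.head hstep1 (Relation.ReflTransGen.head hstep2 hrec))

end Split

namespace Aux2
open Aux

variable {W : Type*}

lemma succ_of_mem {l : List W} {z zl : W} (hnd : l.Nodup) (hz : z ∈ l)
    (hl : l.getLast? = some zl) (hne : z ≠ zl) :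
    ∃ e ∈ edgesOfL l, e.1 = z := by
  obtain ⟨i, hi, hiz⟩ := List.mem_iff_getElem.1 hz
  have hlen : i + 1 < l.length := by
    by_contra hcon
    have hieq : i = l.length - 1 := by omega
    subst hieq
    exact hne (hiz.symm.trans (getElem_last hl hi))
  exact ⟨(l[i], l[i+1]), edge_index.2 ⟨i, hlen, rfl, rfl⟩, hiz⟩

lemma dropLast_cases {l : List W} {b : W} (hh : l.head? = some b) :
    ∀ w ∈ l.dropLast, w = b ∨ w ∈ internalsL l := by
  intro w hw
  rw [eq_cons_tail hh] at hw
  cases htl : l.tail with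
  | nil => rw [htl] at hw; simp at hw
  | cons c T =>
    rw [htl] at hw
    have : (b :: c :: T).dropLast = b :: (c :: T).dropLast := by simp
    rw [this] at hw
    rcases List.mem_cons.1 hw with rfl | h
    · exact Or.inl rfl
    · right
      rw [internals_eq, htl]
      exact h

end Aux2

namespace Aux2
open Aux

lemma decode_aux {E : V → V → Prop} {y : V} :
    ∀ (n : ℕ) (L : List (V × Bool)), L.length = n → L.Chain' (Es E) → L.Nodup →
    (y, true) ∉ L → ∀ a, L.head? = some (a, true) → L.getLast? = some (y, false) →
    ∃ M : List V, M.Chain' E ∧ M.head? = some a ∧ M.getLast? = some y ∧ M.Nodup ∧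
      (∀ w ∈ M.tail, (w, false) ∈ L) ∧
      (∀ w ∈ internalsL M, ((w, false), (w, true)) ∈ edgesOfL L) ∧
      (∀ pq ∈ edgesOfL M, ((pq.1, true), (pq.2, false)) ∈ edgesOfL L) := by
  intro n
  induction n using Nat.strong_induction_on with
  | _ n IH =>
    intro L hn hc hnd hyt a hh hl
    cases L with
    | nil => simp at hh
    | cons p L' =>
      obtain rfl : p = (a, true) := by simpa using hh
      have hay : a ≠ y := by
        rintro rfl
        exact hyt (List.mem_cons_self)
      cases L' with
      | nil =>
        exfalso
        have : (a, true) = (y, false) := by simpa using hl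
        simpa using congrArg Prod.snd this
      | cons q L'' =>
        have hq : Es E (a, true) q := (List.isChain_cons_cons.1 hc).1
        obtain ⟨b, hb⟩ : ∃ b, q = (b, false) := by
          rcases hq with ⟨_, h2, _⟩ | ⟨h1, _, _⟩
          · exact ⟨q.1, Prod.ext rfl h2⟩
          · simp at h1
        subst hb
        have hEab : E a b := by
          rcases hq with ⟨_, _, h3⟩ | ⟨h1, _, _⟩
          · exact h3
          · simp at h1
        cases L'' with
        | nil =>
          have hby : b = y := by
            have h2 : (b, false) = (y, false) := by simpa using hl
            simpa using congrArg Prod.fst h2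
          subst hby
          refine ⟨[a, b], by simp [List.Chain', hEab], by simp, by simp, by simp [hay], ?_, by simp [internalsL], ?_⟩
          · intro w hw
            obtain rfl : w = b := by simpa using hw
            simp
          · intro pq hpq
            obtain rfl : pq = (a, b) := by simpa [edgesOfL] using hpq
            simp [edgesOfL]
        | cons r L''' =>
          have hr : Es E (b, false) r := (List.isChain_cons_cons.1 (List.isChain_cons_cons.1 hc).2).1
          obtain rfl : r = (b, true) := by
            rcases hr with ⟨h1, _, _⟩ | ⟨_, h2, h3⟩
            · simp at h1
            · exact Prod.ext h3.symm h2
          -- recurse on L₂ := (b, true) :: L'''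
          have hsub : ((b, true) :: L''').Sublist ((a, true) :: (b, false) :: (b, true) :: L''') := by
            refine List.Sublist.trans ?_ (List.sublist_cons_self _ _)
            exact List.sublist_cons_self _ _
          obtain ⟨M', hM'c, hM'h, hM'l, hM'nd, hM'tail, hM'int, hM'edge⟩ :=
            IH ((b, true) :: L''').length (by subst hn; simp)
              ((b, true) :: L''') rfl
              ((List.isChain_cons_cons.1 hc).2.tail)
              (hnd.sublist hsub)
              (fun hcon => hyt (hsub.mem hcon))
              b rfl
              (by rw [← hl, List.getLast?_cons_cons, List.getLast?_cons_cons])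
          have hanotM' : a ∉ M' := by
            intro hmem
            rw [eq_cons_tail hM'h] at hmem
            rcases List.mem_cons.1 hmem with rfl | hmem'
            · -- a = b : then (a,true) appears twice
              exact (List.nodup_cons.1 hnd).1 (by simp)
            · -- a ∈ M'.tail : (a,false) ∈ L₂
              have hafL : (a, false) ∈ (a, true) :: (b, false) :: (b, true) :: L''' :=
                List.mem_cons_of_mem _ (List.mem_cons_of_mem _ (hM'tail a hmem'))
              have hane : (a, false) ≠ (y, false) := by
                intro hcon
                exact hay (by simpa using congrArg Prod.fst hcon)
              obtain ⟨e, he, he1⟩ := succ_of_mem hnd hafL hl (by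
                intro hcon; exact hane hcon)
              have hesE : Es E e.1 e.2 := rel_of_edge hc e he
              have he2 : e.2 = (a, true) := by
                rw [he1] at hesE
                rcases hesE with ⟨h1, _, _⟩ | ⟨_, h2, h3⟩
                · simp at h1
                · exact Prod.ext h3.symm h2
              have h5 := edge_snd_mem_tail he
              rw [he2] at h5
              exact head_not_mem_tail hnd rfl h5
          refine ⟨a :: M', ?_, rfl, ?_, List.nodup_cons.2 ⟨hanotM', hM'nd⟩, ?_, ?_, ?_⟩
          · rw [eq_cons_tail hM'h]
            rw [eq_cons_tail hM'h] at hM'c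
            exact List.isChain_cons_cons.2 ⟨hEab, hM'c⟩
          · rw [eq_cons_tail hM'h, List.getLast?_cons_cons, ← eq_cons_tail hM'h]
            exact hM'l
          · intro w hw
            simp only [List.tail_cons] at hw
            rw [eq_cons_tail hM'h] at hw
            rcases List.mem_cons.1 hw with rfl | hw'
            · simp
            · exact List.mem_cons_of_mem _ (List.mem_cons_of_mem _ (hM'tail w hw'))
          · intro w hw
            rw [internals_eq, List.tail_cons] at hw
            rcases dropLast_cases hM'h w hw with rfl | hw'
            · rw [edges_cons_cons, edges_cons_cons]
              exact List.mem_cons_of_mem _ (List.mem_cons_self)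
            · have := hM'int w hw'
              rw [edges_cons_cons, edges_cons_cons]
              exact List.mem_cons_of_mem _ (List.mem_cons_of_mem _ this)
          · intro pq hpq
            rw [eq_cons_tail hM'h, edges_cons_cons] at hpq
            rcases List.mem_cons.1 hpq with rfl | hpq'
            · rw [edges_cons_cons]
              exact List.mem_cons_self
            · have := hM'edge pq (by rw [eq_cons_tail hM'h]; exact hpq')
              rw [edges_cons_cons, edges_cons_cons]
              exact List.mem_cons_of_mem _ (List.mem_cons_of_mem _ this)

end Aux2

namespace Aux2
open Aux Relation

lemma pred_of_mem {W : Type*} {l : List W} {z zh : W} (hz : z ∈ l)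
    (hh : l.head? = some zh) (hne : z ≠ zh) :
    ∃ e ∈ edgesOfL l, e.2 = z := by
  obtain ⟨i, hi, hiz⟩ := List.mem_iff_getElem.1 hz
  have hi0 : i ≠ 0 := by
    rintro rfl
    exact hne (hiz.symm.trans (getElem_head hh hi)).symm.symm
  refine ⟨(l[i-1]'(by omega), l[i]'hi), edge_index.2 ⟨i - 1, by omega, rfl, ?_⟩, hiz⟩
  congr 1
  omega

lemma encode_reach' {E : V → V → Prop} {x y : V} (hxy : x ≠ y)
    (e : (V × Bool) × (V × Bool)) {M₀ : List V}
    (hc : M₀.Chain' E) (hh : M₀.head? = some x) (hl : M₀.getLast? = some y)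
    (hedges : ∀ pq ∈ edgesOfL M₀, ((pq.1, true), (pq.2, false)) ≠ e)
    (hints : ∀ w ∈ internalsL M₀, ((w, false), (w, true)) ≠ e) :
    Relation.ReflTransGen (delE (Es E) e.1 e.2) (x, true) (y, false) := by
  have h2 := eq_cons_tail hh
  have hne : M₀.tail ≠ [] := by
    intro hcon
    rw [h2, hcon] at hl
    exact hxy (by simpa using hl)
  exact encode_reach e M₀.tail x (h2 ▸ hc) (h2 ▸ hl) hne (h2 ▸ hedges) (h2 ▸ hints)

lemma es_res {E : V → V → Prop} {x y : V} (hxy : x ≠ y)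
    (hv : ∀ w, w ≠ x → w ≠ y → Relation.ReflTransGen (delV E w) x y)
    (he : ∀ a b, Relation.ReflTransGen (delE E a b) x y) :
    ∀ p q : V × Bool, Relation.ReflTransGen (delE (Es E) p q) (x, true) (y, false) := by
  rintro ⟨a, ba⟩ ⟨b, bb⟩
  obtain ⟨M₀, hc, hh, hl, hnd⟩ := simple_path_of_rtg (he x x)
  have hcE : M₀.Chain' E := delE_mono hc
  cases ba with
  | true =>
    cases bb with
    | false =>
      -- real edge deletion
      obtain ⟨M₁, hc₁, hh₁, hl₁, hnd₁⟩ := simple_path_of_rtg (he a b)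
      refine encode_reach' hxy ((a, true), (b, false)) (delE_mono hc₁) hh₁ hl₁ ?_ ?_
      · intro pq hpq hcon
        have h1 : pq.1 = a := by simpa using congrArg (fun z => z.1.1) hcon
        have h2 : pq.2 = b := by simpa using congrArg (fun z => z.2.1) hcon
        exact (rel_of_edge hc₁ pq hpq).2 ⟨h1, h2⟩
      · intro w hw hcon
        simpa using congrArg (fun z => z.1.2) hcon
    | true =>
      -- shape mismatch
      refine encode_reach' hxy ((a, true), (b, true)) hcE hh hl ?_ ?_
      · intro pq hpq hcon
        simpa using congrArg (fun z => z.2.2) hcon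
      · intro w hw hcon
        simpa using congrArg (fun z => z.1.2) hcon
  | false =>
    cases bb with
    | false =>
      refine encode_reach' hxy ((a, false), (b, false)) hcE hh hl ?_ ?_
      · intro pq hpq hcon
        simpa using congrArg (fun z => z.1.2) hcon
      · intro w hw hcon
        simpa using congrArg (fun z => z.2.2) hcon
    | true =>
      by_cases hab : a = b
      · subst hab
        by_cases haxy : a = x ∨ a = y
        · -- cap of endpoint : any path works
          refine encode_reach' hxy ((a, false), (a, true)) hcE hh hl ?_ ?_
          · intro pq hpq hcon
            simpa using congrArg (fun z => z.1.2) hcon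
          · intro w hw hcon
            have hwa : w = a := by simpa using congrArg (fun z => z.1.1) hcon
            obtain ⟨hwx, hwy⟩ := internals_ne hnd hh hl hw
            rcases haxy with rfl | rfl
            · exact hwx hwa
            · exact hwy hwa
        · push_neg at haxy
          obtain ⟨M₁, hc₁, hh₁, hl₁, hnd₁⟩ := simple_path_of_rtg (hv a haxy.1 haxy.2)
          refine encode_reach' hxy ((a, false), (a, true)) (delV_mono hc₁) hh₁ hl₁ ?_ ?_
          · intro pq hpq hcon
            simpa using congrArg (fun z => z.1.2) hcon
          · intro w hw hcon
            have hwa : w = a := by simpa using congrArg (fun z => z.1.1) hcon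
            have hlen : 2 ≤ M₁.length := length_ge_two hh₁ hl₁ hxy
            have hwm : w ∈ M₁ := List.mem_of_mem_tail (internals_subset w hw).1
            exact delV_avoid hc₁ hlen w hwm hwa
      · refine encode_reach' hxy ((a, false), (b, true)) hcE hh hl ?_ ?_
        · intro pq hpq hcon
          simpa using congrArg (fun z => z.1.2) hcon
        · intro w hw hcon
          have h1 : w = a := by simpa using congrArg (fun z => z.1.1) hcon
          have h2 : w = b := by simpa using congrArg (fun z => z.2.1) hcon
          exact hab (h1.symm.trans h2)

end Aux2

namespace Aux2
open Aux Relation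

lemma menger2V {E : V → V → Prop} {x y : V} (hxy : x ≠ y)
    (hv : ∀ w, w ≠ x → w ≠ y → Relation.ReflTransGen (delV E w) x y)
    (he : ∀ a b, Relation.ReflTransGen (delE E a b) x y) :
    TwoVPaths E x y := by
  have hst : ((x, true) : V × Bool) ≠ (y, false) := by simp
  obtain ⟨L₁, L₂, ⟨hc₁, hh₁, hl₁⟩, ⟨hc₂, hh₂, hl₂⟩, hnd₁, hnd₂, hEdisj⟩ :=
    mengerE hst (fun p q => es_res hxy hv he p q)
  -- (y, true) is not on either path
  have hyt : ∀ (L : List (V × Bool)), L.Chain' (Es E) → L.Nodup →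
      L.head? = some (x, true) → L.getLast? = some (y, false) → (y, true) ∉ L := by
    intro L hc hnd hh hl hmem
    have hne : ((y, true) : V × Bool) ≠ (x, true) := by simp [Ne.symm hxy]
    obtain ⟨e, he', he2⟩ := pred_of_mem hmem hh hne
    have hesE : Es E e.1 e.2 := rel_of_edge hc e he'
    have he1 : e.1 = (y, false) := by
      rw [he2] at hesE
      rcases hesE with ⟨_, h2, _⟩ | ⟨h1, _, h3⟩
      · simp at h2
      · exact Prod.ext (by simpa using h3) h1
    have := edge_fst_mem_dropLast he'
    rw [he1] at this
    exact last_not_mem_dropLast hnd hl this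
  obtain ⟨M₁, hM₁c, hM₁h, hM₁l, hM₁nd, hM₁tail, hM₁int, hM₁edge⟩ :=
    decode_aux L₁.length L₁ rfl hc₁ hnd₁ (hyt L₁ hc₁ hnd₁ hh₁ hl₁) x hh₁ hl₁
  obtain ⟨M₂, hM₂c, hM₂h, hM₂l, hM₂nd, hM₂tail, hM₂int, hM₂edge⟩ :=
    decode_aux L₂.length L₂ rfl hc₂ hnd₂ (hyt L₂ hc₂ hnd₂ hh₂ hl₂) x hh₂ hl₂
  have hMne : M₁ ≠ M₂ := by
    intro hcon
    have h2 := eq_cons_tail hM₁h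
    have htne : M₁.tail ≠ [] := by
      intro hnil
      rw [h2, hnil] at hM₁l
      exact hxy (by simpa using hM₁l)
    obtain ⟨c, T, hct⟩ : ∃ c T, M₁.tail = c :: T := by
      cases htl : M₁.tail with
      | nil => exact absurd htl htne
      | cons c T => exact ⟨c, T, rfl⟩
    have hfe : (x, c) ∈ edgesOfL M₁ := by
      rw [h2, hct, edges_cons_cons]
      exact List.mem_cons_self
    exact hEdisj _ (hM₁edge (x, c) hfe) (hM₂edge (x, c) (hcon ▸ hfe))
  refine ⟨M₁, M₂, ⟨hM₁c, hM₁h, hM₁l⟩, ⟨hM₂c, hM₂h, hM₂l⟩, hM₁nd, hM₂nd, hMne, ?_⟩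
  intro w hw₁ hw₂
  exact hEdisj _ (hM₁int w hw₁) (hM₂int w hw₂)

lemma twoV_resV {E : V → V → Prop} {x y : V} (hxy : x ≠ y) (h : TwoVPaths E x y) :
    ∀ w, w ≠ x → w ≠ y → Relation.ReflTransGen (delV E w) x y := by
  obtain ⟨l₁, l₂, h₁, h₂, hn₁, hn₂, hne, hdisj⟩ := h
  exact resV_of_two hxy h₁ h₂ hn₁ hn₂ hdisj

lemma twoV_resE {E : V → V → Prop} {x y : V} (hxy : x ≠ y) (h : TwoVPaths E x y) :
    ∀ a b, Relation.ReflTransGen (delE E a b) x y := by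
  obtain ⟨l₁, l₂, h₁, h₂, hn₁, hn₂, hne, hdisj⟩ := h
  exact resE_of_two hxy h₁ h₂ hn₁ hn₂ hne hdisj

end Aux2

end Aux

/-- if `u,v,x,y` are distinct vertices with `u↔2v x`, `v↔2v x`,
`u↔2v y`, `v↔2v y`, then `x↔2v y` and `u↔2v v`. -/
theorem stmt16 (E : V → V → Prop) (u v x y : V)
    (huv : u ≠ v) (hux : u ≠ x) (huy : u ≠ y) (hvx : v ≠ x) (hvy : v ≠ y)
    (hxy : x ≠ y)
    (h1 : TwoVConn E u x) (h2 : TwoVConn E v x)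
    (h3 : TwoVConn E u y) (h4 : TwoVConn E v y) :
    TwoVConn E x y ∧ TwoVConn E u v := by
  open Aux Aux.Aux2 in
  have glue : ∀ (p q m₁ m₂ : V), p ≠ q → m₁ ≠ m₂ → p ≠ m₁ → m₁ ≠ q → p ≠ m₂ → m₂ ≠ q →
      TwoVPaths E p m₁ → TwoVPaths E m₁ q → TwoVPaths E p m₂ → TwoVPaths E m₂ q →
      TwoVPaths E p q := by
    intro p q m₁ m₂ hpq hm hpm₁ hm₁q hpm₂ hm₂q g1 g2 g3 g4
    apply menger2V hpq
    · intro w hwp hwq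
      by_cases hwm : w = m₁
      · exact (twoV_resV hpm₂ g3 w hwp (hwm ▸ hm)).trans
          (twoV_resV hm₂q g4 w (hwm ▸ hm).symm.symm hwq)
      · exact (twoV_resV hpm₁ g1 w hwp hwm).trans (twoV_resV hm₁q g2 w hwm hwq)
    · intro a b
      exact (twoV_resE hpm₁ g1 a b).trans (twoV_resE hm₁q g2 a b)
  refine ⟨⟨hxy, ?_, ?_⟩, ⟨huv, ?_, ?_⟩⟩
  · exact glue x y u v hxy huv hux.symm huy hvx.symm hvy h1.2.2 h3.2.1 h2.2.2 h4.2.1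
  · exact glue y x u v hxy.symm huv huy.symm hux hvy.symm hvx h3.2.2 h1.2.1 h4.2.2 h2.2.1
  · exact glue u v x y huv hxy hux hvx.symm huy hvy.symm h1.2.1 h2.2.2 h3.2.1 h4.2.2
  · exact glue v u x y huv.symm hxy hvx hux.symm hvy huy.symm h2.2.1 h1.2.2 h4.2.1 h3.2.2
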